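/- arXiv:1105.0873 — 2 statements merged into one kernel-verified Lean document; each statement's English description precedes it below -/
import Mathlib

section
/- For the Euclidean weight W(x) = |x| − (1+|x|)^{1−2σ} on ℝⁿ with n ≥ 3 and 0 < σ < 1/2, there exist constants C, c > 0 such that on ℝⁿ ∖ {0}: |x||ΔW| + |∇W| ≤ C, −Δ²W ≥ c(1+|x|)^{−3−2σ}, and Hess(W) ≥ c(1+|x|)^{−1−2σ} Id as quadratic forms (away from the origin). -/
open MeasureTheory Filter

noncomputable def pd {n : ℕ} {F : Type*} [NormedAddCommGroup F] [NormedSpace ℝ F]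
    (f : EuclideanSpace ℝ (Fin n) → F) (i : Fin n) (x : EuclideanSpace ℝ (Fin n)) : F :=
  fderiv ℝ f x (EuclideanSpace.single i 1)

noncomputable def lap {n : ℕ} {F : Type*} [NormedAddCommGroup F] [NormedSpace ℝ F]
    (f : EuclideanSpace ℝ (Fin n) → F) (x : EuclideanSpace ℝ (Fin n)) : F :=
  ∑ i, pd (fun y => pd f i y) i x

open scoped RealInnerProductSpace

section Machinery

variable {n : ℕ}

lemma hasFDerivAt_norm_ne_zero {x : EuclideanSpace ℝ (Fin n)} (hx : x ≠ 0) :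
    HasFDerivAt (fun y : EuclideanSpace ℝ (Fin n) => ‖y‖) (‖x‖⁻¹ • innerSL ℝ x) x := by
  have h1 : HasFDerivAt (fun y : EuclideanSpace ℝ (Fin n) => ‖y‖^2)
      (2 • (innerSL ℝ x)) x := (hasStrictFDerivAt_norm_sq x).hasFDerivAt
  have hr : (0:ℝ) < ‖x‖ := norm_pos_iff.2 hx
  have h2 : HasDerivAt Real.sqrt (1 / (2 * Real.sqrt (‖x‖^2))) (‖x‖^2) :=
    Real.hasDerivAt_sqrt (by positivity)
  have h3 := h2.comp_hasFDerivAt x h1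
  have hfun : (fun y : EuclideanSpace ℝ (Fin n) => Real.sqrt (‖y‖^2)) = fun y => ‖y‖ :=
    funext fun y => Real.sqrt_sq (norm_nonneg y)
  rw [Function.comp_def, hfun] at h3
  have heq : (1 / (2 * Real.sqrt (‖x‖^2))) • (2:ℕ) • innerSL ℝ x = ‖x‖⁻¹ • innerSL ℝ x := by
    refine ContinuousLinearMap.ext fun v => ?_
    rw [Real.sqrt_sq (norm_nonneg x)]
    simp [smul_smul]
    field_simp
  rw [heq] at h3
  exact h3

lemma radial_hasFDerivAt {f f' : ℝ → ℝ} (hf : ∀ t : ℝ, 0 < t → HasDerivAt f (f' t) t)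
    {x : EuclideanSpace ℝ (Fin n)} (hx : x ≠ 0) :
    HasFDerivAt (fun y : EuclideanSpace ℝ (Fin n) => f ‖y‖)
      ((f' ‖x‖ * ‖x‖⁻¹) • innerSL ℝ x) x := by
  have h3 := (hf ‖x‖ (norm_pos_iff.2 hx)).comp_hasFDerivAt x (hasFDerivAt_norm_ne_zero hx)
  rw [Function.comp_def] at h3
  rw [smul_smul] at h3
  exact h3

lemma pd_radial {f f' : ℝ → ℝ} (hf : ∀ t : ℝ, 0 < t → HasDerivAt f (f' t) t)
    {x : EuclideanSpace ℝ (Fin n)} (hx : x ≠ 0) (i : Fin n) :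
    pd (fun y => f ‖y‖) i x = f' ‖x‖ * ‖x‖⁻¹ * x i := by
  rw [pd, (radial_hasFDerivAt hf hx).fderiv]
  have : ⟪x, EuclideanSpace.single i (1:ℝ)⟫ = x i := by
    rw [EuclideanSpace.inner_single_right]; simp
  simp [this, mul_assoc]

lemma pd_pd_radial {f f1 f2 : ℝ → ℝ}
    (h1 : ∀ t : ℝ, 0 < t → HasDerivAt f (f1 t) t)
    (h2 : ∀ t : ℝ, 0 < t → HasDerivAt f1 (f2 t) t)
    {x : EuclideanSpace ℝ (Fin n)} (hx : x ≠ 0) (i j : Fin n) :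
    pd (fun y => pd (fun z : EuclideanSpace ℝ (Fin n) => f ‖z‖) i y) j x
      = (f2 ‖x‖ - f1 ‖x‖ * ‖x‖⁻¹) * ‖x‖⁻¹ * ‖x‖⁻¹ * (x i * x j)
        + f1 ‖x‖ * ‖x‖⁻¹ * (if i = j then (1:ℝ) else 0) := by
  have hr : (0:ℝ) < ‖x‖ := norm_pos_iff.2 hx
  set G : ℝ → ℝ := fun t => f1 t * t⁻¹ with hGdef
  have hG : ∀ t : ℝ, 0 < t → HasDerivAt G (f2 t * t⁻¹ + f1 t * (-(t^2)⁻¹)) t := by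
    intro t ht
    exact (h2 t ht).mul (hasDerivAt_inv ht.ne')
  have hev : (fun y => pd (fun z : EuclideanSpace ℝ (Fin n) => f ‖z‖) i y)
      =ᶠ[nhds x] (fun y => G ‖y‖ * y i) := by
    filter_upwards [IsOpen.mem_nhds isOpen_compl_singleton hx] with y hy
    rw [pd_radial h1 hy i, hGdef]
  have hproj : HasFDerivAt (fun y : EuclideanSpace ℝ (Fin n) => y i)
      ((EuclideanSpace.proj i : EuclideanSpace ℝ (Fin n) →L[ℝ] ℝ)) x := by
    exact (EuclideanSpace.proj i : EuclideanSpace ℝ (Fin n) →L[ℝ] ℝ).hasFDerivAt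
  have hmul := (radial_hasFDerivAt hG hx).mul hproj
  rw [Pi.mul_def] at hmul
  rw [pd, hev.fderiv_eq, hmul.fderiv]
  have hinner : ⟪x, EuclideanSpace.single j (1:ℝ)⟫ = x j := by
    rw [EuclideanSpace.inner_single_right]; simp
  simp only [ContinuousLinearMap.add_apply, ContinuousLinearMap.smul_apply, innerSL_apply_apply,
    hinner, PiLp.proj_apply, EuclideanSpace.single_apply, smul_eq_mul, hGdef]
  have hne : ‖x‖ ≠ 0 := hr.ne'
  by_cases hij : i = j
  · subst hij; simp only [if_pos rfl, mul_one]
    field_simp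
    ring
  · simp only [if_neg hij, mul_zero, add_zero, zero_add]
    field_simp
    ring

lemma sum_sq_coords {x : EuclideanSpace ℝ (Fin n)} : ∑ i, (x i)^2 = ‖x‖^2 := by
  rw [EuclideanSpace.norm_eq, Real.sq_sqrt (by positivity)]
  simp [sq_abs]

lemma lap_radial {f f1 f2 : ℝ → ℝ}
    (h1 : ∀ t : ℝ, 0 < t → HasDerivAt f (f1 t) t)
    (h2 : ∀ t : ℝ, 0 < t → HasDerivAt f1 (f2 t) t)
    {x : EuclideanSpace ℝ (Fin n)} (hx : x ≠ 0) :
    lap (fun z => f ‖z‖) x = f2 ‖x‖ + (n - 1 : ℝ) * (f1 ‖x‖ * ‖x‖⁻¹) := by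
  have hr : (0:ℝ) < ‖x‖ := norm_pos_iff.2 hx
  have hne : ‖x‖ ≠ 0 := hr.ne'
  rw [lap]
  have : ∀ i : Fin n, pd (fun y => pd (fun z : EuclideanSpace ℝ (Fin n) => f ‖z‖) i y) i x
      = (f2 ‖x‖ - f1 ‖x‖ * ‖x‖⁻¹) * ‖x‖⁻¹ * ‖x‖⁻¹ * (x i)^2 + f1 ‖x‖ * ‖x‖⁻¹ := by
    intro i
    rw [pd_pd_radial h1 h2 hx i i, if_pos rfl, mul_one, sq]
  rw [Finset.sum_congr rfl (fun i _ => this i), Finset.sum_add_distrib,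
    ← Finset.mul_sum, sum_sq_coords, Finset.sum_const]
  simp only [Finset.card_univ, Fintype.card_fin, nsmul_eq_mul]
  field_simp
  ring

lemma lap_congr_ne_zero {F G : EuclideanSpace ℝ (Fin n) → ℝ}
    (hFG : ∀ y : EuclideanSpace ℝ (Fin n), y ≠ 0 → F y = G y)
    {x : EuclideanSpace ℝ (Fin n)} (hx : x ≠ 0) :
    lap F x = lap G x := by
  have hset : ∀ y : EuclideanSpace ℝ (Fin n), y ≠ 0 →
      ({(0 : EuclideanSpace ℝ (Fin n))}ᶜ : Set (EuclideanSpace ℝ (Fin n))) ∈ nhds y :=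
    fun y hy => IsOpen.mem_nhds isOpen_compl_singleton hy
  have hpd : ∀ (i : Fin n) (y : EuclideanSpace ℝ (Fin n)), y ≠ 0 → pd F i y = pd G i y := by
    intro i y hy
    have hev : F =ᶠ[nhds y] G := by
      filter_upwards [hset y hy] with z hz using hFG z hz
    rw [pd, pd, hev.fderiv_eq]
  rw [lap, lap]
  refine Finset.sum_congr rfl fun i _ => ?_
  have hev2 : (fun y => pd F i y) =ᶠ[nhds x] (fun y => pd G i y) := by
    filter_upwards [hset x hx] with z hz using hpd i z hz
  rw [pd, pd, hev2.fderiv_eq]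

lemma lap_lap_radial {f f1 f2 g1 g2 : ℝ → ℝ}
    (h1 : ∀ t : ℝ, 0 < t → HasDerivAt f (f1 t) t)
    (h2 : ∀ t : ℝ, 0 < t → HasDerivAt f1 (f2 t) t)
    (hg1 : ∀ t : ℝ, 0 < t → HasDerivAt (fun u => f2 u + (n - 1 : ℝ) * (f1 u * u⁻¹)) (g1 t) t)
    (hg2 : ∀ t : ℝ, 0 < t → HasDerivAt g1 (g2 t) t)
    {x : EuclideanSpace ℝ (Fin n)} (hx : x ≠ 0) :
    lap (fun y => lap (fun z : EuclideanSpace ℝ (Fin n) => f ‖z‖) y) x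
      = g2 ‖x‖ + (n - 1 : ℝ) * (g1 ‖x‖ * ‖x‖⁻¹) := by
  rw [lap_congr_ne_zero (G := fun y => (fun u => f2 u + (n - 1 : ℝ) * (f1 u * u⁻¹)) ‖y‖)
    (fun y hy => lap_radial h1 h2 hy) hx]
  exact lap_radial hg1 hg2 hx

lemma hasDerivAt_one_add_rpow (p : ℝ) {t : ℝ} (ht : 0 < t) :
    HasDerivAt (fun u : ℝ => (1+u)^p) (p * (1+t)^(p-1)) t := by
  have h0 : (1:ℝ) + t ≠ 0 := by positivity
  have h := (Real.hasDerivAt_rpow_const (x := 1 + t) (p := p) (Or.inl h0)).comp t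
    ((hasDerivAt_id t).const_add 1)
  rw [mul_one] at h
  exact h

end Machinery

set_option maxHeartbeats 2000000 in
/-- Key convexity computations for W(x) = |x| − (1+|x|)^{1−2σ} on ℝⁿ ∖ {0}, n ≥ 3,
0 < σ < 1/2: |x||ΔW| + |∇W| ≤ C, −Δ²W ≥ c⟨1+|x|⟩^{−3−2σ},
Hess(W) ≥ c(1+|x|)^{−1−2σ} Id as quadratic forms. -/
theorem weight_convexity {n : ℕ} (hn : 3 ≤ n) (σ : ℝ) (hσ : 0 < σ) (hσ' : σ < 1/2)
    (W : EuclideanSpace ℝ (Fin n) → ℝ)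
    (hW : ∀ x, W x = ‖x‖ - (1 + ‖x‖) ^ (1 - 2*σ)) :
    ∃ C c : ℝ, 0 < C ∧ 0 < c ∧ ∀ x : EuclideanSpace ℝ (Fin n), x ≠ 0 →
      (‖x‖ * |lap W x| + Real.sqrt (∑ i, (pd W i x) ^ 2) ≤ C)
      ∧ (-(lap (fun y => lap W y) x) ≥ c * (1 + ‖x‖) ^ (-3 - 2*σ))
      ∧ (∀ v : EuclideanSpace ℝ (Fin n),
          (∑ j, ∑ k, pd (fun y => pd W k y) j x * v j * v k)
            ≥ c * (1 + ‖x‖) ^ (-1 - 2*σ) * ‖v‖ ^ 2) := by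
  set f : ℝ → ℝ := fun t => t - (1+t)^(1-2*σ) with hf_def
  set f1 : ℝ → ℝ := fun t => 1 - (1-2*σ)*(1+t)^(-(2*σ)) with hf1_def
  set f2 : ℝ → ℝ := fun t => ((1-2*σ)*(2*σ))*(1+t)^(-1-2*σ) with hf2_def
  set f3 : ℝ → ℝ := fun t => -((1-2*σ)*(2*σ)*(1+2*σ))*(1+t)^(-2-2*σ) with hf3_def
  set f4 : ℝ → ℝ := fun t => ((1-2*σ)*(2*σ)*(1+2*σ)*(2+2*σ))*(1+t)^(-3-2*σ) with hf4_def
  have hd1 : ∀ t : ℝ, 0 < t → HasDerivAt f (f1 t) t := by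
    intro t ht
    have h := (hasDerivAt_id t).sub ((hasDerivAt_one_add_rpow (1-2*σ) ht))
    rw [show (1-2*σ)-1 = -(2*σ) by ring] at h
    exact h
  have hd2 : ∀ t : ℝ, 0 < t → HasDerivAt f1 (f2 t) t := by
    intro t ht
    have h := (((hasDerivAt_one_add_rpow (-(2*σ)) ht)).const_mul (1-2*σ)).const_sub 1
    rw [show -(2*σ)-1 = -1-2*σ by ring] at h
    refine h.congr_deriv ?_
    simp only [hf2_def]; ring
  have hd3 : ∀ t : ℝ, 0 < t → HasDerivAt f2 (f3 t) t := by
    intro t ht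
    have h := ((hasDerivAt_one_add_rpow (-1-2*σ) ht)).const_mul ((1-2*σ)*(2*σ))
    rw [show -1-2*σ-1 = -2-2*σ by ring] at h
    refine h.congr_deriv ?_
    simp only [hf3_def]; ring
  have hd4 : ∀ t : ℝ, 0 < t → HasDerivAt f3 (f4 t) t := by
    intro t ht
    have h := ((hasDerivAt_one_add_rpow (-2-2*σ) ht)).const_mul (-((1-2*σ)*(2*σ)*(1+2*σ)))
    rw [show -2-2*σ-1 = -3-2*σ by ring] at h
    refine h.congr_deriv ?_
    simp only [hf4_def]; ring
  set g1 : ℝ → ℝ := fun t => f3 t + (n-1:ℝ)*(f2 t * t⁻¹ + f1 t * (-(t^2)⁻¹)) with hg1_def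
  set g2 : ℝ → ℝ := fun t => f4 t + (n-1:ℝ)*((f3 t * t⁻¹ + f2 t * (-(t^2)⁻¹))
      + (f2 t * (-(t^2)⁻¹) + f1 t * (2*t/(t^2)^2))) with hg2_def
  have hdg1 : ∀ t : ℝ, 0 < t → HasDerivAt
      (fun u => f2 u + (n-1:ℝ)*(f1 u * u⁻¹)) (g1 t) t := by
    intro t ht
    exact (hd3 t ht).add (((hd2 t ht).mul (hasDerivAt_inv ht.ne')).const_mul (n-1:ℝ))
  have hdg2 : ∀ t : ℝ, 0 < t → HasDerivAt g1 (g2 t) t := by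
    intro t ht
    have hinv : HasDerivAt (fun u : ℝ => -(u^2)⁻¹) (2*t/(t^2)^2) t := by
      have := ((hasDerivAt_pow 2 t).inv (pow_ne_zero 2 ht.ne')).neg
      refine this.congr_deriv ?_
      push_cast; ring
    have h := (hd4 t ht).add ((((hd3 t ht).mul (hasDerivAt_inv ht.ne')).add
      (((hd2 t ht).mul hinv))).const_mul (n-1:ℝ))
    exact h
  have hWf : W = fun y => f ‖y‖ := funext fun y => by rw [hW y]
  have hn' : (3:ℝ) ≤ (n:ℝ) := by exact_mod_cast hn
  refine ⟨(n:ℝ) + 2, (1-2*σ)*(2*σ), by positivity, by nlinarith, ?_⟩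
  intro x hx
  have hr : (0:ℝ) < ‖x‖ := norm_pos_iff.2 hx
  set r : ℝ := ‖x‖ with hr_def
  have hne : r ≠ 0 := hr.ne'
  have hu0 : (0:ℝ) < 1 + r := by linarith
  have hu1 : (1:ℝ) ≤ 1 + r := by linarith
  -- basic power facts
  have hE0 : (0:ℝ) < (1+r)^(-(2*σ)) := Real.rpow_pos_of_pos hu0 _
  have hE1 : (1+r)^(-(2*σ)) ≤ 1 := Real.rpow_le_one_of_one_le_of_nonpos hu1 (by linarith)
  have hP0 : (0:ℝ) < (1+r)^(-3-2*σ) := Real.rpow_pos_of_pos hu0 _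
  have hP10 : (0:ℝ) < (1+r)^(-1-2*σ) := Real.rpow_pos_of_pos hu0 _
  have hPw1 : (1+r)^(-2-2*σ) = (1+r) * (1+r)^(-3-2*σ) := by
    rw [show (-2-2*σ) = 1 + (-3-2*σ) by ring, Real.rpow_add hu0, Real.rpow_one]
  have hPw2 : (1+r)^(-1-2*σ) = (1+r)^2 * (1+r)^(-3-2*σ) := by
    rw [show (-1-2*σ) = 2 + (-3-2*σ) by ring, Real.rpow_add hu0]
    norm_num [Real.rpow_two]
  have hru : r * (1+r)^(-1-2*σ) ≤ 1 := by
    have h1 : (1+r)^(-1-2*σ) ≤ (1+r)^(-1:ℝ) :=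
      Real.rpow_le_rpow_of_exponent_le hu1 (by linarith)
    have h2 : (1+r)^(-1:ℝ) = (1+r)⁻¹ := by
      rw [Real.rpow_neg_one]
    have h3 : r * (1+r)⁻¹ ≤ 1 := by
      rw [mul_inv_le_iff₀ hu0]; linarith
    calc r * (1+r)^(-1-2*σ) ≤ r * (1+r)⁻¹ := by
          apply mul_le_mul_of_nonneg_left _ hr.le
          rw [← h2]; exact h1
      _ ≤ 1 := h3
  -- f1 bounds
  have hF1low : 2*σ ≤ f1 r := by
    simp only [hf1_def]
    nlinarith [mul_nonneg (show (0:ℝ) ≤ 1-2*σ by linarith) (sub_nonneg.2 hE1)]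
  have hF1hi : f1 r ≤ 1 := by
    simp only [hf1_def]
    nlinarith [mul_nonneg (show (0:ℝ) ≤ 1-2*σ by linarith) hE0.le]
  have hF1pos : 0 < f1 r := by nlinarith
  -- f1 ≥ r * f2
  have hF1f2 : r * f2 r ≤ f1 r := by
    simp only [hf2_def]
    have : ((1-2*σ)*(2*σ)) * (r * (1+r)^(-1-2*σ)) ≤ ((1-2*σ)*(2*σ)) * 1 :=
      mul_le_mul_of_nonneg_left hru (by nlinarith)
    nlinarith [hF1low]
  -- the values of derivatives of W
  have pdW : ∀ i, pd W i x = f1 r * r⁻¹ * x i := by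
    intro i; rw [hWf]; exact pd_radial hd1 hx i
  have lapW : lap W x = f2 r + (n-1:ℝ)*(f1 r * r⁻¹) := by
    rw [hWf]; exact lap_radial hd1 hd2 hx
  have laplapW : lap (fun y => lap W y) x = g2 r + (n-1:ℝ)*(g1 r * r⁻¹) := by
    rw [hWf]; exact lap_lap_radial hd1 hd2 hdg1 hdg2 hx
  have hessW : ∀ j k, pd (fun y => pd W k y) j x
      = (f2 r - f1 r * r⁻¹) * r⁻¹ * r⁻¹ * (x k * x j)
        + f1 r * r⁻¹ * (if k = j then (1:ℝ) else 0) := by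
    intro j k; rw [hWf]; exact pd_pd_radial hd1 hd2 hx k j
  refine ⟨?_, ?_, ?_⟩
  · -- first bound
    have hK : 0 < (1-2*σ)*(2*σ) := by nlinarith
    have hsum : ∑ i, (pd W i x)^2 = (f1 r)^2 := by
      have hterm : ∀ i : Fin n, (pd W i x)^2 = ((f1 r)^2 * (r⁻¹)^2) * (x i)^2 := by
        intro i; rw [pdW i]; ring
      rw [Finset.sum_congr rfl fun i _ => hterm i, ← Finset.mul_sum, sum_sq_coords, ← hr_def]
      field_simp
    rw [hsum, Real.sqrt_sq hF1pos.le, lapW]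
    have hf2pos : 0 < f2 r := by
      simp only [hf2_def]; exact mul_pos hK hP10
    have hlappos : 0 ≤ f2 r + (n-1:ℝ)*(f1 r * r⁻¹) := by
      have h1 : 0 < f1 r * r⁻¹ := mul_pos hF1pos (inv_pos.2 hr)
      nlinarith
    rw [abs_of_nonneg hlappos]
    have hexp : r * (f2 r + (n-1:ℝ)*(f1 r * r⁻¹)) = r * f2 r + (n-1:ℝ)*f1 r := by
      field_simp
    rw [hexp]
    have h1 : r * f2 r ≤ 1 := by
      simp only [hf2_def]
      nlinarith [mul_le_mul_of_nonneg_left hru hK.le, hK]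
    have h2 : (n-1:ℝ)*f1 r ≤ (n-1:ℝ) := by nlinarith
    linarith
  · -- bi-Laplacian bound
    rw [ge_iff_le, laplapW]
    have hK : 0 < (1-2*σ)*(2*σ) := by nlinarith
    have key2 : g2 r + (n-1:ℝ)*(g1 r * r⁻¹)
        = f4 r + 2*(n-1:ℝ)*(f3 r * r⁻¹)
          + ((n-1:ℝ)*((n:ℝ)-3))*(f2 r * (r^2)⁻¹ - f1 r * (r^3)⁻¹) := by
      simp only [hg1_def, hg2_def]
      field_simp
      ring
    rw [key2]
    simp only [hf2_def, hf3_def, hf4_def]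
    rw [hPw1, hPw2]
    have hX : (1+r)^(-3-2*σ) ≤ (1+r) * (1+r)^(-3-2*σ) * r⁻¹ := by
      have h1 : (1:ℝ) ≤ (1+r) * r⁻¹ := by
        rw [show (1+r) * r⁻¹ = (1+r)/r by ring, le_div_iff₀ hr]
        linarith
      nlinarith [mul_le_mul_of_nonneg_left h1 hP0.le]
    have hc : (0:ℝ) ≤ 2*((n:ℝ)-1)*(((1-2*σ)*(2*σ))*(1+2*σ)) := by
      apply mul_nonneg (by linarith)
      exact mul_nonneg hK.le (by linarith)
    have step1 := mul_le_mul_of_nonneg_left hX hc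
    have step2 : ((1-2*σ)*(2*σ))*(1+2*σ)*(2+2*σ)*((1+r)^(-3-2*σ))
        + ((1-2*σ)*(2*σ))*((1+r)^(-3-2*σ))
        ≤ 2*((n:ℝ)-1)*(((1-2*σ)*(2*σ))*(1+2*σ))*((1+r)^(-3-2*σ)) := by
      have hp1 : (0:ℝ) ≤ ((n:ℝ)-3) * ((1+2*σ) * ((1-2*σ)*(2*σ)*(1+r)^(-3-2*σ))) := by
        apply mul_nonneg (by linarith)
        apply mul_nonneg (by linarith) (mul_pos hK hP0).le
      have hp2 : (0:ℝ) ≤ (1+2*σ-4*σ^2) * ((1-2*σ)*(2*σ)*(1+r)^(-3-2*σ)) := by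
        apply mul_nonneg (by nlinarith) (mul_pos hK hP0).le
      nlinarith [hp1, hp2]
    have HB : (0:ℝ) ≤ ((n-1:ℝ)*((n:ℝ)-3)) * (f1 r * (r^3)⁻¹
        - ((1-2*σ)*(2*σ))*((1+r)^2*(1+r)^(-3-2*σ))*(r^2)⁻¹) := by
      apply mul_nonneg (by nlinarith)
      have hnum : (0:ℝ) ≤ f1 r - ((1-2*σ)*(2*σ))*((1+r)^2*(1+r)^(-3-2*σ))*r := by
        have h5 := hF1f2
        simp only [hf2_def] at h5
        rw [hPw2] at h5
        nlinarith [h5]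
      have heq : f1 r * (r^3)⁻¹ - ((1-2*σ)*(2*σ))*((1+r)^2*(1+r)^(-3-2*σ))*(r^2)⁻¹
          = (f1 r - ((1-2*σ)*(2*σ))*((1+r)^2*(1+r)^(-3-2*σ))*r) * (r^3)⁻¹ := by
        field_simp
      rw [heq]
      exact mul_nonneg hnum (by positivity)
    nlinarith [step1, step2, HB]
  · -- Hessian bound
    intro v
    have hK : 0 < (1-2*σ)*(2*σ) := by nlinarith
    set T : ℝ := ∑ j, x j * v j with hT_def
    set V : ℝ := ∑ j, (v j)^2 with hV_def
    have hVnn : (0:ℝ) ≤ V := Finset.sum_nonneg fun j _ => sq_nonneg _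
    have hVnorm : V = ‖v‖^2 := sum_sq_coords
    set A : ℝ := (f2 r - f1 r * r⁻¹) * r⁻¹ * r⁻¹ with hA_def
    set B : ℝ := f1 r * r⁻¹ with hB_def
    have inner_eq : ∀ j : Fin n,
        (∑ k, pd (fun y => pd W k y) j x * v j * v k)
          = A * ((x j * v j) * T) + B * (v j)^2 := by
      intro j
      have hterm : ∀ k, pd (fun y => pd W k y) j x * v j * v k
          = A * ((x j * v j) * (x k * v k)) + (if k = j then B * (v j * v k) else 0) := by
        intro k
        rw [hessW j k]
        by_cases h : k = j
        · subst h
          split_ifs with h'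
          · ring
          · exact absurd rfl h'
        · simp only [if_neg h]; ring
      rw [Finset.sum_congr rfl fun k _ => hterm k, Finset.sum_add_distrib]
      congr 1
      · rw [← Finset.mul_sum]
        congr 1
        rw [← Finset.mul_sum, hT_def]
      · rw [Finset.sum_ite_eq' Finset.univ j (fun k => B * (v j * v k))]
        simp only [Finset.mem_univ, if_pos]
        ring
    have hform : (∑ j, ∑ k, pd (fun y => pd W k y) j x * v j * v k)
        = A * T^2 + B * V := by
      rw [Finset.sum_congr rfl fun j _ => inner_eq j, Finset.sum_add_distrib,
        ← Finset.mul_sum, ← Finset.mul_sum, ← Finset.sum_mul, ← hT_def, ← hV_def]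
      ring
    have hxv : ⟪x, v⟫ = T := by
      rw [hT_def]
      simp [PiLp.inner_apply, RCLike.inner_apply, conj_trivial, mul_comm]
    have hxx : ⟪x, x⟫ = r^2 := by
      rw [real_inner_self_eq_norm_sq, hr_def]
    have hvv : ⟪v, v⟫ = V := by
      rw [real_inner_self_eq_norm_sq, hVnorm]
    have hCS : T^2 ≤ r^2 * V := by
      have h := real_inner_mul_inner_self_le x v
      rw [hxv, hxx, hvv] at h
      linarith only [h]
    have h1 : f2 r ≤ f1 r * r⁻¹ := by
      rw [show f1 r * r⁻¹ = f1 r / r by ring, le_div_iff₀ hr]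
      linarith only [hF1f2]
    have h2 : (0:ℝ) ≤ V - T^2*(r^2)⁻¹ := by
      rw [sub_nonneg, show T^2*(r^2)⁻¹ = T^2/(r^2) by ring, div_le_iff₀ (by positivity)]
      linarith only [hCS]
    have key : A * T^2 + B * V - (f2 r) * V
        = (f1 r * r⁻¹ - f2 r) * (V - T^2*(r^2)⁻¹) := by
      rw [hA_def, hB_def]
      field_simp
      ring
    have hprod : (0:ℝ) ≤ (f1 r * r⁻¹ - f2 r) * (V - T^2*(r^2)⁻¹) :=
      mul_nonneg (by linarith) h2
    have hgoal : A * T^2 + B * V ≥ f2 r * V := by linarith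
    rw [ge_iff_le, hform, ← hVnorm]
    have hf2val : f2 r = (1-2*σ)*(2*σ) * (1 + r) ^ (-1 - 2*σ) := by
      simp only [hf2_def]
    calc (1-2*σ)*(2*σ) * (1 + r) ^ (-1 - 2*σ) * V = f2 r * V := by rw [hf2val]
      _ ≤ A * T^2 + B * V := hgoal
end

section
/- Let Q(r) = R(r) + λM(r) − A(r) where M, R, A arise from a C² solution of v'' − L(L−1)r^{−2}v + λv = 0 with L ≥ 1, λ > 0 (M = |v|², R = |v'|², A = L(L−1)r^{−2}|v|²). If Q(r) → 0 as r → ∞ (along a sequence) then Q(r) ≤ 0 for all r, since Q' = (2/r)A ≥ 0. I.e., R + λM ≤ A everywhere. -/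
open Filter Set


lemma normSq_hasDerivAt {w : ℝ → ℂ} {w' : ℂ} {r : ℝ} (hw : HasDerivAt w w' r) :
    HasDerivAt (fun r => ‖w r‖ ^ 2)
      (2 * ((w r).re * w'.re + (w r).im * w'.im)) r := by
  have hre : HasDerivAt (fun r => (w r).re) w'.re r :=
    (Complex.reCLM.hasFDerivAt.comp_hasDerivAt r hw)
  have him : HasDerivAt (fun r => (w r).im) w'.im r :=
    (Complex.imCLM.hasFDerivAt.comp_hasDerivAt r hw)
  have h : HasDerivAt (fun r => (w r).re ^ 2 + (w r).im ^ 2)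
      (2 * (w r).re * w'.re + 2 * (w r).im * w'.im) r := by
    simpa [mul_comm, mul_assoc, pow_two] using
      ((hre.fun_pow 2).fun_add (him.fun_pow 2))
  have : (fun r => ‖w r‖ ^ 2) = fun r => (w r).re ^ 2 + (w r).im ^ 2 := by
    funext x
    rw [Complex.sq_norm, Complex.normSq_apply]; ring
  rw [this]
  convert h using 1; ring

/-- The Pohozaev bound (Lemma 10.5) in the model case: for Q = R + λM − A built from a
solution of the Bessel equation v'' − L(L−1)r^{−2}v + λv = 0 (L ≥ 1, λ > 0), if
Q(r_k) → 0 along some sequence r_k → ∞, then Q ≤ 0 everywhere, i.e. R + λM ≤ A. -/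
theorem pohozaev_bound (L lam : ℝ) (hL : 1 ≤ L) (hlam : 0 < lam)
    (v v' v'' : ℝ → ℂ)
    (hd1 : ∀ r : ℝ, 0 < r → HasDerivAt v (v' r) r)
    (hd2 : ∀ r : ℝ, 0 < r → HasDerivAt v' (v'' r) r)
    (hode : ∀ r : ℝ, 0 < r →
      v'' r - (L * (L - 1) / r ^ 2 : ℝ) * v r + (lam : ℂ) * v r = 0)
    (Q : ℝ → ℝ)
    (hQ : ∀ r, Q r = ‖v' r‖ ^ 2 + lam * ‖v r‖ ^ 2 - L * (L - 1) / r ^ 2 * ‖v r‖ ^ 2)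
    (rk : ℕ → ℝ)
    (hrk : Tendsto rk atTop atTop) (hrkpos : ∀ k, 0 < rk k)
    (hQ0 : Tendsto (fun k => Q (rk k)) atTop (nhds 0)) :
    ∀ r : ℝ, 0 < r → Q r ≤ 0 := by
  -- derivative of Q
  have key : ∀ r : ℝ, 0 < r →
      HasDerivAt Q (2 * L * (L - 1) / r ^ 3 * ‖v r‖ ^ 2) r := by
    intro r hr
    have hr0 : r ≠ 0 := ne_of_gt hr
    have h1 := normSq_hasDerivAt (hd2 r hr)
    have h2 := normSq_hasDerivAt (hd1 r hr)
    -- derivative of coefficient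
    have hc : HasDerivAt (fun r : ℝ => L * (L - 1) / r ^ 2)
        ((0 * r ^ 2 - L * (L - 1) * (↑2 * r ^ 1)) / (r ^ 2) ^ 2) r :=
      (hasDerivAt_const r (L * (L - 1))).div (hasDerivAt_pow 2 r)
        (pow_ne_zero 2 hr0)
    have hQd : HasDerivAt (fun r => ‖v' r‖ ^ 2 + lam * ‖v r‖ ^ 2
        - L * (L - 1) / r ^ 2 * ‖v r‖ ^ 2)
        (2 * ((v' r).re * (v'' r).re + (v' r).im * (v'' r).im)
          + lam * (2 * ((v r).re * (v' r).re + (v r).im * (v' r).im))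
          - (((0 * r ^ 2 - L * (L - 1) * (↑2 * r ^ 1)) / (r ^ 2) ^ 2) * ‖v r‖ ^ 2
            + (L * (L - 1) / r ^ 2) * (2 * ((v r).re * (v' r).re + (v r).im * (v' r).im)))) r :=
      (h1.add (h2.const_mul lam)).sub (hc.mul h2)
    have hQfun : Q = fun r => ‖v' r‖ ^ 2 + lam * ‖v r‖ ^ 2
        - L * (L - 1) / r ^ 2 * ‖v r‖ ^ 2 := funext hQ
    rw [hQfun]
    convert hQd using 1
    -- use the ODE componentwise
    set c : ℝ := L * (L - 1) / r ^ 2 with hcdef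
    have hode' : v'' r = (c : ℂ) * v r - (lam : ℂ) * v r := by
      have := hode r hr; rw [hcdef]; linear_combination this
    have hre : (v'' r).re = c * (v r).re - lam * (v r).re := by
      rw [hode']; simp
    have him : (v'' r).im = c * (v r).im - lam * (v r).im := by
      rw [hode']; simp
    have hnorm : ‖v r‖ ^ 2 = (v r).re ^ 2 + (v r).im ^ 2 := by
      rw [Complex.sq_norm, Complex.normSq_apply]; ring
    rw [hre, him, hnorm, hcdef]
    field_simp
    ring
  -- Q is monotone on Ioi 0
  have hmono : MonotoneOn Q (Ioi 0) := by
    apply monotoneOn_of_deriv_nonneg (convex_Ioi 0)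
    · exact fun x hx => ((key x hx).continuousAt).continuousWithinAt
    · intro x hx
      rw [interior_Ioi] at hx
      exact (key x hx).differentiableAt.differentiableWithinAt
    · intro x hx
      rw [interior_Ioi] at hx
      rw [(key x hx).deriv]
      have h1 : 0 ≤ 2 * L * (L - 1) / x ^ 3 := by
        exact div_nonneg (by nlinarith) (pow_pos hx 3).le
      exact mul_nonneg h1 (sq_nonneg _)
  intro r hr
  have hev : ∀ᶠ k in atTop, Q r ≤ Q (rk k) := by
    filter_upwards [hrk.eventually_ge_atTop r] with k hk
    exact hmono hr (hrkpos k) hk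
  exact ge_of_tendsto hQ0 hev
end
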